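/- Let τ0={nop,inp,out} and let τ be a Boolean type of net with {nop,res,set} ⊆ τ. A loop-free initialized transition system A has the τ0-SSP if and only if its loop-extension D has the τ-SSP. -/

import Mathlib

/-!  Common framework: Boolean types of nets, transition systems (as labeled
edge relations), τ-regions, state separation. -/

inductive Interaction : Type
  | nop | inp | out | res | set | swap | used | free
  deriving DecidableEq

/-- The partial function on `{0,1}` (encoded as `Bool`, `false = 0`, `true = 1`)
defined by a Boolean interaction. -/
def Interaction.eval : Interaction → Bool → Option Bool
  | .nop, x => some x
  | .inp, true => some false
  | .inp, false => none
  | .out, false => some true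
  | .out, true => none
  | .res, _ => some false
  | .set, _ => some true
  | .swap, x => some (!x)
  | .used, true => some true
  | .used, false => none
  | .free, false => some false
  | .free, true => none

/-- `(sup, sig)` is a `τ`-region of the transition system given by the labeled
edge relation `edge`. -/
def IsRegion {S E : Type} (edge : S → E → S → Prop) (τ : Set Interaction)
    (sup : S → Bool) (sig : E → Interaction) : Prop :=
  (∀ e, sig e ∈ τ) ∧
    ∀ s e s', edge s e s' → (sig e).eval (sup s) = some (sup s')

/-- The `τ`-state separation property: every pair of distinct states (SSP atom)
is solved by some `τ`-region. -/
def HasSSP {S E : Type} (edge : S → E → S → Prop) (τ : Set Interaction) : Prop :=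
  ∀ s s' : S, s ≠ s' → ∃ sup sig, IsRegion edge τ sup sig ∧ sup s ≠ sup s'

def Deterministic {S E : Type} (edge : S → E → S → Prop) : Prop :=
  ∀ s e s₁ s₂, edge s e s₁ → edge s e s₂ → s₁ = s₂

inductive Reachable {S E : Type} (edge : S → E → S → Prop) : S → S → Prop
  | refl (s : S) : Reachable edge s s
  | tail {s t u : S} {e : E} : Reachable edge s t → edge t e u → Reachable edge s u

/-- `ι` is an initial state from which every state is reachable. -/
def Initialized {S E : Type} (edge : S → E → S → Prop) (ι : S) : Prop :=
  ∀ s, Reachable edge ι s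

def LoopFree {S E : Type} (edge : S → E → S → Prop) : Prop :=
  ∀ s e s', edge s e s' → s ≠ s'

def BiDirected {S E : Type} (edge : S → E → S → Prop) : Prop :=
  LoopFree edge ∧ ∀ s e s', edge s e s' → edge s' e s

/-- A region is normalized (for a `nop`-equipped type): no event has signature
`used` or `free`, and every event with signature in `{inp,out,res,set,swap}`
has an edge on which the support changes. -/
def Normalized {S E : Type} (edge : S → E → S → Prop)
    (sup : S → Bool) (sig : E → Interaction) : Prop :=
  ∀ e, (sig e ≠ Interaction.used ∧ sig e ≠ Interaction.free) ∧
    ((sig e = Interaction.inp ∨ sig e = Interaction.out ∨ sig e = Interaction.res ∨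
        sig e = Interaction.set ∨ sig e = Interaction.swap) →
      ∃ s s', edge s e s' ∧ sup s ≠ sup s')

/-- save = save₁ ∪ save₀ = {nop,set,used} ∪ {nop,res,free}. -/
def saveSet : Set Interaction :=
  {Interaction.nop, Interaction.set, Interaction.used, Interaction.res, Interaction.free}

/-- The backward-extension `B` of a loop-free TS `A`: events are `E ⊕ E`
(`Sum.inl e` is `e`, `Sum.inr e` is the fresh event `ē`); every edge
`s →e s'` of `A` yields the edges `s →e s'` and `s' →ē s`. -/
def backwardExt {S E : Type} (edge : S → E → S → Prop) : S → E ⊕ E → S → Prop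
  | s, Sum.inl e, s' => edge s e s'
  | s, Sum.inr e, s' => edge s' e s

/-- The oneway loop-extension `C` of a loop-free TS `A`: every edge `s →e s'`
of `A` yields the edges `s →e s'`, `s' →ē s` and the loop `s' →e s'`. -/
def onewayLoopExt {S E : Type} (edge : S → E → S → Prop) : S → E ⊕ E → S → Prop
  | s, Sum.inl e, s' => edge s e s' ∨ (s = s' ∧ ∃ q, edge q e s')
  | s, Sum.inr e, s' => edge s' e s

/-- The loop-extension `D` of a loop-free TS `A`: every edge `s →e s'` of `A`
yields the edges `s →e s'`, `s' →ē s` and the loops `s' →e s'` and `s →ē s`. -/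
def loopExt {S E : Type} (edge : S → E → S → Prop) : S → E ⊕ E → S → Prop
  | s, Sum.inl e, s' => edge s e s' ∨ (s = s' ∧ ∃ q, edge q e s')
  | s, Sum.inr e, s' => edge s' e s ∨ (s = s' ∧ ∃ q, edge s e q)

instance : Fintype Interaction where
  elems := ⟨↑[Interaction.nop, Interaction.inp, Interaction.out, Interaction.res,
    Interaction.set, Interaction.swap, Interaction.used, Interaction.free],
    Multiset.coe_nodup.mpr (by decide)⟩
  complete := fun x => by cases x <;> decide

/-- Forward map on signatures for the loop-extension. -/
def fmapI : Interaction → Interaction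
  | .inp => .res
  | .out => .set
  | _ => .nop

/-- Backward map on signatures for the loop-extension. -/
def bmapI : Interaction → Interaction
  | .inp => .set
  | .out => .res
  | _ => .nop

lemma fmapI_edge : ∀ (i : Interaction) (a b : Bool),
    (i = .nop ∨ i = .inp ∨ i = .out) → i.eval a = some b → (fmapI i).eval a = some b := by
  decide

lemma fmapI_loop : ∀ (i : Interaction) (c b : Bool),
    (i = .nop ∨ i = .inp ∨ i = .out) → i.eval c = some b → (fmapI i).eval b = some b := by
  decide

lemma bmapI_edge : ∀ (i : Interaction) (a b : Bool),
    (i = .nop ∨ i = .inp ∨ i = .out) → i.eval a = some b → (bmapI i).eval b = some a := by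
  decide

lemma bmapI_loop : ∀ (i : Interaction) (a b : Bool),
    (i = .nop ∨ i = .inp ∨ i = .out) → i.eval a = some b → (bmapI i).eval a = some a := by
  decide

lemma key_lemma : ∀ (i j : Interaction) (a b a' b' : Bool),
    i.eval a = some b → j.eval b = some a →
    i.eval a' = some b' → i.eval b' = some b' →
    j.eval b' = some a' → j.eval a' = some a' →
    a' ≠ b' → a = a' ∧ b = b' := by
  intro i j a b a' b' h1 h2 h3 h4 h5 h6 h7
  cases i <;> cases j <;> cases a <;> cases b <;> cases a' <;> cases b' <;>
    simp_all [Interaction.eval]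

/-- for `τ₀ = {nop,inp,out}` and any Boolean type of nets `τ` with
`{nop,res,set} ⊆ τ`, a loop-free initialized TS `A` has the `τ₀`-SSP iff its
loop-extension `D` has the `τ`-SSP. -/
theorem loop_extension_ssp
    {S E : Type} [Finite S] [Finite E]
    (edge : S → E → S → Prop) (hdet : Deterministic edge)
    (ι : S) (hinit : Initialized edge ι) (hlf : LoopFree edge)
    (τ : Set Interaction)
    (hτ : {Interaction.nop, Interaction.res, Interaction.set} ⊆ τ) :
    HasSSP edge {Interaction.nop, Interaction.inp, Interaction.out} ↔
      HasSSP (loopExt edge) τ := by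
  classical
  constructor
  · -- forward: A has τ₀-SSP ⇒ D has τ-SSP
    intro h s s' hne
    obtain ⟨sup, sig, ⟨hmem, hreg⟩, hsep⟩ := h s s' hne
    have hmem' : ∀ e, sig e = .nop ∨ sig e = .inp ∨ sig e = .out := by
      intro e
      have := hmem e
      simpa [Set.mem_insert_iff] using this
    refine ⟨sup, fun ee => match ee with
      | Sum.inl e => fmapI (sig e)
      | Sum.inr e => bmapI (sig e), ⟨?_, ?_⟩, hsep⟩
    · rintro (e | e) <;> rcases hmem' e with h3 | h3 | h3 <;>
        simp only [h3, fmapI, bmapI] <;> apply hτ <;> simp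
    · rintro p (e | e) q hpq
      · rcases hpq with hpq | ⟨rfl, r, hrq⟩
        · exact fmapI_edge _ _ _ (hmem' e) (hreg p e q hpq)
        · exact fmapI_loop _ _ _ (hmem' e) (hreg r e p hrq)
      · rcases hpq with hpq | ⟨rfl, r, hrq⟩
        · exact bmapI_edge _ _ _ (hmem' e) (hreg q e p hpq)
        · exact bmapI_loop _ _ _ (hmem' e) (hreg p e r hrq)
  · -- backward: D has τ-SSP ⇒ A has τ₀-SSP
    intro h s s' hne
    obtain ⟨sup, sig, ⟨hmem, hreg⟩, hsep⟩ := h s s' hne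
    -- facts from the region of D for each A-edge
    have h1 : ∀ p e q, edge p e q → (sig (Sum.inl e)).eval (sup p) = some (sup q) :=
      fun p e q hpq => hreg p (Sum.inl e) q (Or.inl hpq)
    have h2 : ∀ p e q, edge p e q → (sig (Sum.inl e)).eval (sup q) = some (sup q) :=
      fun p e q hpq => hreg q (Sum.inl e) q (Or.inr ⟨rfl, p, hpq⟩)
    have h3 : ∀ p e q, edge p e q → (sig (Sum.inr e)).eval (sup q) = some (sup p) :=
      fun p e q hpq => hreg q (Sum.inr e) p (Or.inl hpq)
    have h4 : ∀ p e q, edge p e q → (sig (Sum.inr e)).eval (sup p) = some (sup p) :=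
      fun p e q hpq => hreg p (Sum.inr e) p (Or.inr ⟨rfl, q, hpq⟩)
    refine ⟨sup, fun e =>
      if ∃ p q, edge p e q ∧ sup p = true ∧ sup q = false then .inp
      else if ∃ p q, edge p e q ∧ sup p = false ∧ sup q = true then .out
      else .nop, ⟨?_, ?_⟩, hsep⟩
    · intro e
      dsimp only
      split_ifs <;> simp
    · intro p e q hpq
      dsimp only
      split_ifs with hw1 hw2
      · obtain ⟨p', q', hpq', ha', hb'⟩ := hw1
        have hk := key_lemma (sig (Sum.inl e)) (sig (Sum.inr e)) (sup p) (sup q)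
          (sup p') (sup q') (h1 p e q hpq) (h3 p e q hpq)
          (h1 p' e q' hpq') (h2 p' e q' hpq') (h3 p' e q' hpq') (h4 p' e q' hpq')
          (by rw [ha', hb']; simp)
        rw [hk.1, hk.2, ha', hb']
        rfl
      · obtain ⟨p', q', hpq', ha', hb'⟩ := hw2
        have hk := key_lemma (sig (Sum.inl e)) (sig (Sum.inr e)) (sup p) (sup q)
          (sup p') (sup q') (h1 p e q hpq) (h3 p e q hpq)
          (h1 p' e q' hpq') (h2 p' e q' hpq') (h3 p' e q' hpq') (h4 p' e q' hpq')
          (by rw [ha', hb']; simp)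
        rw [hk.1, hk.2, ha', hb']
        rfl
      · have heq : sup p = sup q := by
          by_contra hneq
          cases hp : sup p <;> cases hq : sup q
          · exact hneq (by rw [hp, hq])
          · exact hw2 ⟨p, q, hpq, hp, hq⟩
          · exact hw1 ⟨p, q, hpq, hp, hq⟩
          · exact hneq (by rw [hp, hq])
        rw [heq]
        rfl
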